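/- Let A ∈ ℝ^{n×n} be the adjacency matrix of a vertex-transitive strongly regular graph with parameters (n,δ,λ,μ) satisfying 0 < δ and δ ≠ μ, used as the assignment matrix (k = n). Let B be the random-diagonal encoding matrix built from A with parameter ε = 0. Let 𝓕 be the random non-straggler set in which each worker index is included independently with probability 1−q, q ∈ [0,1), independent of the diagonal matrices, and let R := (B_𝓕^T B_𝓕)^{−1} B_𝓕^T F when 𝓕 ≠ ∅ with B_𝓕 R := 0 when 𝓕 = ∅. Then E_D[E_𝓕[B_𝓕 R]] = β F for some nonzero real constant β. -/

import Mathlib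

open MeasureTheory Matrix

noncomputable section

/-- The set `S = [1-ε, 1+ε] ∪ [-1-ε, -1+ε]`. -/
def Sset (ε : ℝ) : Set ℝ := Set.Icc (1 - ε) (1 + ε) ∪ Set.Icc (-1 - ε) (-1 + ε)

/-- The uniform probability distribution on `Sset ε`; for `ε = 0` this is the uniform
distribution on `{-1, 1}`. -/
noncomputable def uniformS (ε : ℝ) : Measure ℝ :=
  if ε = 0 then (2 : ENNReal)⁻¹ • (Measure.dirac (1 : ℝ) + Measure.dirac (-1 : ℝ))
  else (volume (Sset ε))⁻¹ • volume.restrict (Sset ε)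

/-- Joint law of the diagonal entries of the i.i.d. random diagonal matrices
`D_1, …, D_m` (the entry of `D_i` at position `j` is `d (i, j)`). -/
noncomputable def μD (m : ℕ) (ν : Type*) [Fintype ν] (ε : ℝ) :
    Measure ((Fin m × ν) → ℝ) :=
  Measure.pi fun _ => uniformS ε

/-- Random-diagonal encoding matrix: the vertical stack of `A * D_1, …, A * D_m`,
with rows indexed by `Fin m × κ` (block `i`, row `r`). -/
def encB {m : ℕ} {κ ν : Type*} (A : Matrix κ ν ℝ) (d : (Fin m × ν) → ℝ) :
    Matrix (Fin m × κ) ν ℝ :=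
  Matrix.of fun p j => A p.2 j * d (p.1, j)

/-- The target matrix `F = [f_1 | … | f_m]`, where `f_i` is `1` on the `i`-th block. -/
def Fmat (m : ℕ) (κ : Type*) : Matrix (Fin m × κ) (Fin m) ℝ :=
  Matrix.of fun p i => if p.1 = i then 1 else 0

/-- Column submatrix corresponding to the non-straggler set `𝓕`. -/
def subCols {α ν : Type*} (M : Matrix α ν ℝ) (𝓕 : Finset ν) : Matrix α ↥𝓕 ℝ :=
  M.submatrix id (fun j => (j : ν))

/-- Squared Frobenius norm. -/
def frobSq {α β : Type*} [Fintype α] [Fintype β] (M : Matrix α β ℝ) : ℝ :=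
  ∑ i, ∑ j, (M i j) ^ 2

/-- The approximation error `Err_𝓕(B) = inf_R ‖B_𝓕 R − F‖_F²`. -/
noncomputable def err {m : ℕ} {κ ν : Type*} [Fintype κ] [Fintype ν]
    (B : Matrix (Fin m × κ) ν ℝ) (𝓕 : Finset ν) : ℝ :=
  ⨅ R : Matrix ↥𝓕 (Fin m) ℝ, frobSq (subCols B 𝓕 * R - Fmat m κ)

/-- Bernoulli measure on `Bool`: `true` (non-straggler) with probability `1 - q`. -/
noncomputable def bern (q : ℝ) : Measure Bool :=
  ENNReal.ofReal (1 - q) • Measure.dirac true + ENNReal.ofReal q • Measure.dirac false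

/-- Law of the random non-straggler set: each worker is included independently
with probability `1 - q`. -/
noncomputable def μF (ν : Type*) [Fintype ν] (q : ℝ) : Measure (ν → Bool) :=
  Measure.pi fun _ => bern q

/-- The (random) non-straggler set determined by the indicators `ω`. -/
def finsetOf {ν : Type*} [Fintype ν] (ω : ν → Bool) : Finset ν :=
  Finset.univ.filter fun j => ω j = true

/-- `B_𝓕 R` for the least-squares optimal decoder `R = (B_𝓕ᵀ B_𝓕)⁻¹ B_𝓕ᵀ F`
when `𝓕 ≠ ∅`, and `0` when `𝓕 = ∅`. -/
noncomputable def projMat {m : ℕ} {κ ν : Type*} [Fintype κ] [Fintype ν] [DecidableEq ν]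
    (B : Matrix (Fin m × κ) ν ℝ) (𝓕 : Finset ν) : Matrix (Fin m × κ) (Fin m) ℝ :=
  if 𝓕 = ∅ then 0
  else subCols B 𝓕 * ((subCols B 𝓕)ᵀ * subCols B 𝓕)⁻¹ * ((subCols B 𝓕)ᵀ * Fmat m κ)


section aux

/-- pi of two-point measures is a weighted sum of diracs. -/
lemma pi_two_point {ι α : Type*} [Fintype ι] [DecidableEq ι] [MeasurableSpace α]
    [MeasurableSingletonClass α] (c : Bool → ENNReal) (hc : ∀ b, c b ≠ ⊤) (x : Bool → α) :
    Measure.pi (fun _ : ι => c true • Measure.dirac (x true) + c false • Measure.dirac (x false)) =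
      ∑ s : ι → Bool, (∏ i, c (s i)) • Measure.dirac (fun i => x (s i)) := by
  haveI : ∀ _i : ι, IsFiniteMeasure
      (c true • Measure.dirac (x true) + c false • Measure.dirac (x false)) := by
    intro _i
    constructor
    simp only [Measure.add_apply, Measure.smul_apply, smul_eq_mul, measure_univ, mul_one]
    exact ENNReal.add_lt_top.2 ⟨(hc true).lt_top, (hc false).lt_top⟩
  refine Measure.pi_eq fun t ht => ?_
  rw [Measure.finset_sum_apply]
  have hmeas : MeasurableSet (Set.pi Set.univ t) := MeasurableSet.univ_pi ht
  have key : ∀ s : ι → Bool,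
      ((∏ i, c (s i)) • Measure.dirac (fun i => x (s i))) (Set.pi Set.univ t)
        = ∏ i, (c (s i) * (t i).indicator 1 (x (s i))) := by
    intro s
    rw [Measure.smul_apply, Measure.dirac_apply' _ hmeas, smul_eq_mul]
    have hind : (Set.univ.pi t).indicator (1 : (ι → α) → ENNReal) (fun i => x (s i))
        = ∏ i, (t i).indicator 1 (x (s i)) := by
      by_cases h : (fun i => x (s i)) ∈ Set.univ.pi t
      · rw [Set.indicator_of_mem h,
          Finset.prod_congr rfl fun i _ => Set.indicator_of_mem (h i trivial) (1 : α → ENNReal)]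
        simp
      · rw [Set.indicator_of_notMem h]
        simp only [Set.mem_pi, Set.mem_univ, forall_true_left, not_forall] at h
        obtain ⟨i, hi⟩ := h
        rw [eq_comm, Finset.prod_eq_zero (Finset.mem_univ i) (Set.indicator_of_notMem hi _)]
    rw [hind, Finset.prod_mul_distrib]
  simp_rw [key]
  rw [← Fintype.prod_sum (fun (i : ι) (b : Bool) => c b * (t i).indicator 1 (x b))]
  refine Finset.prod_congr rfl fun i _ => ?_
  rw [Fintype.sum_bool]
  simp [Measure.dirac_apply' _ (ht i)]

lemma integral_sum_smul_dirac {α : Type*} [MeasurableSpace α] [MeasurableSingletonClass α]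
    {ι : Type*} [Fintype ι] (c : ι → ENNReal) (hc : ∀ i, c i ≠ ⊤) (x : ι → α) (f : α → ℝ) :
    ∫ a, f a ∂(∑ i, c i • Measure.dirac (x i)) = ∑ i, (c i).toReal * f (x i) := by
  have hint : ∀ i : ι, Integrable f (c i • Measure.dirac (x i)) := by
    intro i
    refine Integrable.smul_measure ?_ (hc i)
    refine (integrable_const (f (x i))).congr ?_
    rw [Filter.eventuallyEq_iff_exists_mem]
    exact ⟨{x i}, by rw [MeasureTheory.ae_dirac_eq]; exact Filter.mem_pure.2 rfl,
      fun a ha => by simp at ha; simp [ha]⟩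
  rw [integral_finset_sum_measure fun i _ => hint i]
  refine Finset.sum_congr rfl fun i _ => ?_
  rw [integral_smul_measure, integral_dirac, smul_eq_mul]
/-- sign vector attached to a boolean pattern -/
def sgn {ι : Type*} (s : ι → Bool) : ι → ℝ := fun i => if s i then 1 else -1

lemma μD_eq (m : ℕ) (ν : Type*) [Fintype ν] [DecidableEq ν] :
    μD m ν 0 = ∑ s : (Fin m × ν) → Bool,
      (∏ _i : (Fin m × ν), (2 : ENNReal)⁻¹) • Measure.dirac (sgn s) := by
  have h : uniformS 0 = (fun _b : Bool => (2:ENNReal)⁻¹) true • Measure.dirac ((sgn (fun _ : Unit => true)) ())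
      + (fun _b : Bool => (2:ENNReal)⁻¹) false • Measure.dirac ((sgn (fun _ : Unit => false)) ()) := by
    rw [uniformS, if_pos rfl, smul_add]; rfl
  have := pi_two_point (ι := Fin m × ν) (fun _ => (2:ENNReal)⁻¹)
    (fun _ => by simp) (fun b => if b then (1:ℝ) else -1)
  rw [μD]
  have huni : (fun _ : Fin m × ν => uniformS 0)
      = fun _ => ((2:ENNReal)⁻¹ • Measure.dirac (1:ℝ) + (2:ENNReal)⁻¹ • Measure.dirac (-1:ℝ)) := by
    funext _; rw [uniformS, if_pos rfl, smul_add]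
  rw [huni]
  exact this

lemma μF_eq (ν : Type*) [Fintype ν] [DecidableEq ν] (q : ℝ) :
    μF ν q = ∑ s : ν → Bool,
      (∏ j, if s j then ENNReal.ofReal (1 - q) else ENNReal.ofReal q) • Measure.dirac s := by
  rw [μF]
  have := pi_two_point (ι := ν) (fun b => if b then ENNReal.ofReal (1 - q) else ENNReal.ofReal q)
    (fun b => by cases b <;> simp) (fun b => b)
  simpa [bern] using this

lemma double_red (m n : ℕ) (q : ℝ)
    (f : ((Fin m × Fin n) → ℝ) → ((Fin n) → Bool) → ℝ) :
    ∫ d, ∫ ω, f d ω ∂(μF (Fin n) q) ∂(μD m (Fin n) 0)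
      = ∑ s : (Fin m × Fin n) → Bool, ∑ ω : Fin n → Bool,
          (∏ _i : (Fin m × Fin n), (2 : ENNReal)⁻¹).toReal *
          ((∏ j, if ω j then ENNReal.ofReal (1 - q) else ENNReal.ofReal q).toReal * f (sgn s) ω) := by
  have hin : ∀ d, ∫ ω, f d ω ∂(μF (Fin n) q)
      = ∑ ω : Fin n → Bool,
          (∏ j, if ω j then ENNReal.ofReal (1 - q) else ENNReal.ofReal q).toReal * f d ω := by
    intro d
    rw [μF_eq]
    exact integral_sum_smul_dirac _ (fun ω => ENNReal.prod_ne_top fun j _ => by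
      by_cases h : ω j <;> simp [h]) _ _
  simp_rw [hin]
  rw [μD_eq,
    integral_sum_smul_dirac (fun _ : (Fin m × Fin n) → Bool => ∏ _i : Fin m × Fin n, (2:ENNReal)⁻¹)
      (fun s => ENNReal.prod_ne_top fun j _ => by simp) sgn _]
  simp_rw [Finset.mul_sum]
section algebra
variable {n m δ lam mu : ℕ}

section base
variable (A : Matrix (Fin n) (Fin n) ℝ)

/-- column sums equal δ -/
lemma colsum (hsym : Aᵀ = A) (hreg : ∀ i, ∑ j, A i j = (δ : ℝ)) (j : Fin n) :
    ∑ r, A r j = (δ : ℝ) := by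
  have : ∀ r, A r j = A j r := fun r => by
    conv_lhs => rw [← hsym]
    rfl
  rw [Finset.sum_congr rfl fun r _ => this r]
  exact hreg j

/-- A has trivial kernel -/
lemma ker_triv (hδ : 0 < δ) (hδmu : δ ≠ mu)
    (hreg : ∀ i, ∑ j, A i j = (δ : ℝ))
    (hsrg : A * A = (δ : ℝ) • (1 : Matrix (Fin n) (Fin n) ℝ) + (lam : ℝ) • A +
        (mu : ℝ) • (Matrix.of (fun _ _ => 1) - 1 - A))
    (x : Fin n → ℝ) (hx : A *ᵥ x = 0) : x = 0 := by
  have hA1 : A *ᵥ (fun _ => (1:ℝ)) = fun _ => (δ : ℝ) := by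
    funext i; simp [Matrix.mulVec, dotProduct, hreg i]
  have hJ : (Matrix.of (fun _ _ => (1:ℝ)) : Matrix (Fin n) (Fin n) ℝ) *ᵥ x
      = fun _ => ∑ j, x j := by
    funext i; simp [Matrix.mulVec, dotProduct]
  have h2 : (A * A) *ᵥ x = 0 := by
    rw [← Matrix.mulVec_mulVec, hx, Matrix.mulVec_zero]
  rw [hsrg] at h2
  simp only [Matrix.add_mulVec, Matrix.smul_mulVec, Matrix.sub_mulVec,
    Matrix.one_mulVec, hx, smul_zero, add_zero, hJ] at h2
  -- h2 : δ • x + 0 + μ • ((fun _ => ∑ j, x j) - x - 0) = 0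
  have hxc : ∀ i, ((δ:ℝ) - mu) * x i + (mu : ℝ) * (∑ j, x j) = 0 := by
    intro i
    have := congrFun h2 i
    simp only [Pi.add_apply, Pi.smul_apply, Pi.sub_apply, Pi.zero_apply, smul_eq_mul] at this
    linarith
  -- so x is a constant vector
  have hδmuR : (δ:ℝ) - mu ≠ 0 := by
    intro h
    exact hδmu (Nat.cast_injective (by linarith : (δ:ℝ) = mu))
  set c : ℝ := -(mu : ℝ) * (∑ j, x j) / ((δ:ℝ) - mu) with hc
  have hxi : ∀ i, x i = c := by
    intro i
    have := hxc i
    rw [hc, eq_div_iff hδmuR]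
    linarith
  -- then A x = δ c 1 = 0 forces c = 0
  have hAx : ∀ i, (A *ᵥ x) i = (δ : ℝ) * c := by
    intro i
    simp only [Matrix.mulVec, dotProduct]
    rw [Finset.sum_congr rfl fun j _ => by rw [hxi j]]
    rw [← Finset.sum_mul, hreg i]
  rcases Nat.eq_zero_or_pos n with hn | hn
  · exact funext fun i => absurd i.isLt (by omega)
  have hc0 : c = 0 := by
    have h0 := hAx ⟨0, hn⟩
    rw [hx] at h0
    have : (δ:ℝ) * c = 0 := by simpa using h0.symm
    rcases mul_eq_zero.1 this with h | h
    · exact absurd h (by exact_mod_cast hδ.ne')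
    · exact h
  funext i; rw [hxi i, hc0]; rfl

/-- the column submatrix has trivial kernel -/
lemma C_ker_triv (hm : 0 < m) (hδ : 0 < δ) (hδmu : δ ≠ mu)
    (hreg : ∀ i, ∑ j, A i j = (δ : ℝ))
    (hsrg : A * A = (δ : ℝ) • (1 : Matrix (Fin n) (Fin n) ℝ) + (lam : ℝ) • A +
        (mu : ℝ) • (Matrix.of (fun _ _ => 1) - 1 - A))
    (d : (Fin m × Fin n) → ℝ) (hd : ∀ p, d p = 1 ∨ d p = -1)
    (𝓕 : Finset (Fin n)) (x : ↥𝓕 → ℝ)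
    (hx : (subCols (encB A d) 𝓕) *ᵥ x = 0) : x = 0 := by
  classical
  set i₀ : Fin m := ⟨0, hm⟩
  set y : Fin n → ℝ := fun j => if h : j ∈ 𝓕 then d (i₀, j) * x ⟨j, h⟩ else 0 with hy
  have hAy : A *ᵥ y = 0 := by
    funext r
    have h0 := congrFun hx (i₀, r)
    simp only [Matrix.mulVec, dotProduct, subCols, encB, Matrix.submatrix_apply,
      Matrix.of_apply, id_eq, Pi.zero_apply] at h0 ⊢
    rw [← h0]
    have hsplit : ∑ jj : Fin n, A r jj * y jj = ∑ jj : ↥𝓕, A r ↑jj * y ↑jj := by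
      rw [Finset.sum_coe_sort 𝓕 (fun jj => A r jj * y jj)]
      exact (Finset.sum_subset (Finset.subset_univ 𝓕)
        (fun jj _ hj => by simp [hy, dif_neg hj])).symm
    rw [hsplit]
    refine Finset.sum_congr rfl fun jj _ => ?_
    simp only [hy, dif_pos jj.2, Subtype.coe_eta]
    ring
  have hy0 : y = 0 := ker_triv A hδ hδmu hreg hsrg y hAy
  funext j
  have := congrFun hy0 (j : Fin n)
  rw [hy] at this
  simp only [j.2, dif_pos, Pi.zero_apply, Subtype.coe_eta] at this
  have hd0 : d (i₀, (j:Fin n)) ≠ 0 := by rcases hd (i₀, j) with h | h <;> rw [h] <;> norm_num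
  show x j = 0
  rcases mul_eq_zero.1 this with h | h
  · exact absurd h hd0
  · exact h

lemma gram_posdef (hm : 0 < m) (hδ : 0 < δ) (hδmu : δ ≠ mu)
    (hreg : ∀ i, ∑ j, A i j = (δ : ℝ))
    (hsrg : A * A = (δ : ℝ) • (1 : Matrix (Fin n) (Fin n) ℝ) + (lam : ℝ) • A +
        (mu : ℝ) • (Matrix.of (fun _ _ => 1) - 1 - A))
    (d : (Fin m × Fin n) → ℝ) (hd : ∀ p, d p = 1 ∨ d p = -1)
    (𝓕 : Finset (Fin n)) :
    ((subCols (encB A d) 𝓕)ᵀ * subCols (encB A d) 𝓕).PosDef := by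
  set C := subCols (encB A d) 𝓕 with hC
  refine Matrix.PosDef.of_dotProduct_mulVec_pos ?_ ?_
  · have h := Matrix.isHermitian_conjTranspose_mul_self C
    rwa [Matrix.conjTranspose_eq_transpose_of_trivial] at h
  · intro x hx
    rw [star_trivial, ← Matrix.mulVec_mulVec, Matrix.dotProduct_mulVec,
      Matrix.vecMul_transpose]
    have hCx : C *ᵥ x ≠ 0 := fun h =>
      hx (C_ker_triv A hm hδ hδmu hreg hsrg d hd 𝓕 x h)
    have : (0:ℝ) < ∑ p, (C *ᵥ x) p * (C *ᵥ x) p := by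
      have hne : ∃ p, (C *ᵥ x) p ≠ 0 := by
        by_contra h
        push_neg at h
        exact hCx (funext fun p => h p)
      obtain ⟨p, hp⟩ := hne
      refine Finset.sum_pos' (fun q _ => mul_self_nonneg _) ⟨p, Finset.mem_univ p, ?_⟩
      exact mul_self_pos.mpr hp
    simpa [dotProduct] using this

lemma diag_sum_pos (hm : 0 < m) (hδ : 0 < δ) (hδmu : δ ≠ mu)
    (hsym : Aᵀ = A)
    (hreg : ∀ i, ∑ j, A i j = (δ : ℝ))
    (hsrg : A * A = (δ : ℝ) • (1 : Matrix (Fin n) (Fin n) ℝ) + (lam : ℝ) • A +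
        (mu : ℝ) • (Matrix.of (fun _ _ => 1) - 1 - A))
    (d : (Fin m × Fin n) → ℝ) (hd : ∀ p, d p = 1 ∨ d p = -1)
    (𝓕 : Finset (Fin n)) (h𝓕 : 𝓕 ≠ ∅) :
    0 < ∑ r, projMat (encB A d) 𝓕 (⟨0, hm⟩, r) ⟨0, hm⟩ := by
  classical
  set i₀ : Fin m := ⟨0, hm⟩
  simp only [projMat, if_neg h𝓕]
  set C := subCols (encB A d) 𝓕 with hC
  set H := (Cᵀ * C)⁻¹ with hH
  set F := Fmat m (Fin n) with hF
  set v : ↥𝓕 → ℝ := fun k => (Cᵀ * F) k i₀ with hv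
  have hvsum : ∀ j : ↥𝓕, v j = ∑ r, C (i₀, r) j := by
    intro j
    show (Cᵀ * F) j i₀ = ∑ r, C (i₀, r) j
    rw [Matrix.mul_apply, Fintype.sum_prod_type]
    simp only [Matrix.transpose_apply]
    have : ∀ i : Fin m, ∑ r, C (i, r) j * F (i, r) i₀
        = if i = i₀ then ∑ r, C (i, r) j else 0 := by
      intro i
      by_cases h : i = i₀
      · simp only [if_pos h]
        refine Finset.sum_congr rfl fun r _ => ?_
        simp [hF, Fmat, h]
      · simp only [if_neg h]
        refine Finset.sum_eq_zero fun r _ => ?_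
        simp [hF, Fmat, h]
    rw [Finset.sum_congr rfl fun i _ => this i, Finset.sum_ite_eq' Finset.univ i₀]
    simp
  have hvd : ∀ k : ↥𝓕, v k = (δ:ℝ) * d (i₀, ↑k) := by
    intro k
    rw [hvsum k]
    have : ∀ r, C (i₀, r) k = A r ↑k * d (i₀, ↑k) := fun r => rfl
    rw [Finset.sum_congr rfl fun r _ => this r, ← Finset.sum_mul, colsum A hsym hreg]
  have key : ∑ r, (C * H * (Cᵀ * F)) (i₀, r) i₀ = v ⬝ᵥ (H *ᵥ v) := by
    have e1 : ∀ r, (C * H * (Cᵀ * F)) (i₀, r) i₀ = ∑ k, (C * H) (i₀, r) k * v k := by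
      intro r; rw [Matrix.mul_apply]
    rw [Finset.sum_congr rfl fun r _ => e1 r, Finset.sum_comm]
    have e2 : ∀ k : ↥𝓕, ∑ r, (C * H) (i₀, r) k * v k = (∑ j, v j * H j k) * v k := by
      intro k
      rw [← Finset.sum_mul]
      congr 1
      simp only [Matrix.mul_apply]
      rw [Finset.sum_comm]
      refine Finset.sum_congr rfl fun j _ => ?_
      rw [← Finset.sum_mul, hvsum j]
    rw [Finset.sum_congr rfl fun k _ => e2 k]
    simp only [dotProduct, Matrix.mulVec, Finset.sum_mul, Finset.mul_sum]
    rw [Finset.sum_comm]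
    exact Finset.sum_congr rfl fun j _ => Finset.sum_congr rfl fun k _ => by ring
  have hPD : H.PosDef := (gram_posdef A hm hδ hδmu hreg hsrg d hd 𝓕).inv
  have hv0 : v ≠ 0 := by
    obtain ⟨k₀, hk₀⟩ := Finset.nonempty_iff_ne_empty.2 h𝓕
    intro h
    have := congrFun h ⟨k₀, hk₀⟩
    rw [hvd ⟨k₀, hk₀⟩] at this
    have hd0 : d (i₀, k₀) ≠ 0 := by rcases hd (i₀, k₀) with h' | h' <;> rw [h'] <;> norm_num
    have hδ0 : (δ:ℝ) ≠ 0 := by exact_mod_cast hδ.ne'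
    exact (mul_ne_zero hδ0 hd0) (by simpa using this)
  have hpos := hPD.dotProduct_mulVec_pos hv0
  rw [star_trivial] at hpos
  calc (0:ℝ) < v ⬝ᵥ (H *ᵥ v) := hpos
    _ = ∑ r, (C * H * (Cᵀ * F)) (i₀, r) i₀ := key.symm

/-- T1: flipping the signs of block `i` multiplies entries by signs. -/
lemma flip_proj (d : (Fin m × Fin n) → ℝ) (i : Fin m) (𝓕 : Finset (Fin n))
    (p : Fin m × Fin n) (k : Fin m) :
    projMat (encB A (fun p' => if p'.1 = i then -d p' else d p')) 𝓕 p k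
      = (if p.1 = i then (-1:ℝ) else 1) * ((if k = i then (-1:ℝ) else 1) *
          projMat (encB A d) 𝓕 p k) := by
  classical
  set ε : Fin m → ℝ := fun t => if t = i then (-1:ℝ) else 1 with hε
  set S : Matrix (Fin m × Fin n) (Fin m × Fin n) ℝ :=
    Matrix.diagonal (fun p' => ε p'.1) with hS
  set T : Matrix (Fin m) (Fin m) ℝ := Matrix.diagonal ε with hT
  by_cases h𝓕 : 𝓕 = ∅
  · simp [projMat, h𝓕]
  set C := subCols (encB A d) 𝓕 with hCdef
  have hC' : subCols (encB A (fun p' => if p'.1 = i then -d p' else d p')) 𝓕 = S * C := by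
    ext p' j
    simp only [hCdef, subCols, encB, Matrix.submatrix_apply, Matrix.of_apply, id_eq, hS,
      Matrix.diagonal_mul, hε]
    split_ifs <;> ring
  have hSS : S * S = 1 := by
    ext p' q
    rw [hS, Matrix.diagonal_mul_diagonal]
    by_cases hpq : p' = q
    · subst hpq
      rw [Matrix.diagonal_apply_eq, Matrix.one_apply_eq]
      simp only [Pi.mul_apply, hε]
      split_ifs <;> norm_num
    · rw [Matrix.diagonal_apply_ne _ hpq, Matrix.one_apply_ne hpq]
  have hST : Sᵀ = S := Matrix.diagonal_transpose _
  have hSF : S * Fmat m (Fin n) = Fmat m (Fin n) * T := by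
    ext p' k'
    simp only [hS, hT, Matrix.diagonal_mul, Matrix.mul_diagonal, Fmat, Matrix.of_apply, hε]
    by_cases h : p'.1 = k'
    · subst h; simp
    · simp [h]
  have hG : (S * C)ᵀ * (S * C) = Cᵀ * C := by
    rw [Matrix.transpose_mul, hST, Matrix.mul_assoc, ← Matrix.mul_assoc S S C, hSS,
      Matrix.one_mul]
  have hmat : (S * C) * ((S * C)ᵀ * (S * C))⁻¹ * ((S * C)ᵀ * Fmat m (Fin n))
      = S * (C * (Cᵀ * C)⁻¹ * (Cᵀ * Fmat m (Fin n))) * T := by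
    rw [hG, Matrix.transpose_mul, hST, Matrix.mul_assoc Cᵀ S (Fmat m (Fin n)), hSF,
      ← Matrix.mul_assoc Cᵀ (Fmat m (Fin n)) T]
    simp only [Matrix.mul_assoc]
  simp only [projMat, if_neg h𝓕, hC', hmat, ← hCdef]
  rw [hS, hT, Matrix.mul_diagonal, Matrix.diagonal_mul]
  simp only [hε]
  ring

/-- T2: permuting the blocks. -/
lemma perm_proj (d : (Fin m × Fin n) → ℝ) (π : Equiv.Perm (Fin m)) (𝓕 : Finset (Fin n))
    (p : Fin m × Fin n) (k : Fin m) :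
    projMat (encB A (fun p' => d (π p'.1, p'.2))) 𝓕 p k
      = projMat (encB A d) 𝓕 (π p.1, p.2) (π k) := by
  classical
  by_cases h𝓕 : 𝓕 = ∅
  · simp [projMat, h𝓕]
  set φ : (Fin m × Fin n) ≃ (Fin m × Fin n) := Equiv.prodCongr π (Equiv.refl (Fin n)) with hφ
  set C := subCols (encB A d) 𝓕 with hCdef
  have hC' : subCols (encB A (fun p' => d (π p'.1, p'.2))) 𝓕 = C.submatrix φ id := by
    ext p' j
    rfl
  have hG : (C.submatrix φ id)ᵀ * (C.submatrix φ id) = Cᵀ * C := by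
    rw [Matrix.transpose_submatrix]
    have := Matrix.submatrix_mul_equiv Cᵀ C (id : ↥𝓕 → ↥𝓕) φ (id : ↥𝓕 → ↥𝓕)
    simpa using this
  have hF : (Fmat m (Fin n)).submatrix φ π = Fmat m (Fin n) := by
    ext p' k'
    simp only [Matrix.submatrix_apply, Fmat, Matrix.of_apply, hφ, Equiv.prodCongr_apply,
      Prod.map_fst, EmbeddingLike.apply_eq_iff_eq]
  have hCF : (C.submatrix φ id)ᵀ * Fmat m (Fin n) = (Cᵀ * Fmat m (Fin n)).submatrix id π := by
    rw [Matrix.transpose_submatrix]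
    calc Cᵀ.submatrix id φ * Fmat m (Fin n)
        = Cᵀ.submatrix id φ * (Fmat m (Fin n)).submatrix φ π := by rw [hF]
      _ = (Cᵀ * Fmat m (Fin n)).submatrix id π :=
          Matrix.submatrix_mul_equiv Cᵀ (Fmat m (Fin n)) id φ π
  have hCH : (C.submatrix φ id) * (Cᵀ * C)⁻¹ = (C * (Cᵀ * C)⁻¹).submatrix φ id := by
    have := Matrix.submatrix_mul_equiv C ((Cᵀ * C)⁻¹) φ (Equiv.refl ↥𝓕) id
    simpa using this
  have hfin : (C * (Cᵀ * C)⁻¹).submatrix φ id * (Cᵀ * Fmat m (Fin n)).submatrix id π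
      = (C * (Cᵀ * C)⁻¹ * (Cᵀ * Fmat m (Fin n))).submatrix φ π := by
    have := Matrix.submatrix_mul_equiv (C * (Cᵀ * C)⁻¹) (Cᵀ * Fmat m (Fin n)) φ
      (Equiv.refl ↥𝓕) π
    simpa using this
  simp only [projMat, if_neg h𝓕, hC', hG, hCF, hCH, hfin, ← hCdef]
  rfl

/-- T3: relabeling the vertices by a graph automorphism. -/
lemma aut_proj (σ : Equiv.Perm (Fin n)) (hA : ∀ a b, A (σ a) (σ b) = A a b)
    (d : (Fin m × Fin n) → ℝ) (ω : Fin n → Bool) (p : Fin m × Fin n) (k : Fin m) :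
    projMat (encB A (fun p' => d (p'.1, σ p'.2))) (finsetOf (fun j => ω (σ j))) p k
      = projMat (encB A d) (finsetOf ω) (p.1, σ p.2) k := by
  classical
  set 𝓕 : Finset (Fin n) := finsetOf ω with h𝓕def
  set 𝓕' : Finset (Fin n) := finsetOf (fun j => ω (σ j)) with h𝓕'def
  have hmem : ∀ j, j ∈ 𝓕' ↔ σ j ∈ 𝓕 := by
    intro j; simp [h𝓕def, h𝓕'def, finsetOf]
  by_cases h𝓕 : 𝓕 = ∅
  · have h𝓕' : 𝓕' = ∅ := by
      refine Finset.eq_empty_of_forall_notMem fun j hj => ?_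
      have := (hmem j).1 hj
      rw [h𝓕] at this
      exact absurd this (Finset.notMem_empty _)
    simp [projMat, h𝓕, h𝓕']
  have h𝓕' : 𝓕' ≠ ∅ := by
    intro h
    refine h𝓕 (Finset.eq_empty_of_forall_notMem fun j hj => ?_)
    have : σ.symm j ∈ 𝓕' := (hmem _).2 (by simpa using hj)
    rw [h] at this
    exact absurd this (Finset.notMem_empty _)
  set e : ↥𝓕' ≃ ↥𝓕 := σ.subtypeEquiv hmem with he
  set ψ : (Fin m × Fin n) ≃ (Fin m × Fin n) := Equiv.prodCongr (Equiv.refl (Fin m)) σ with hψ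
  set C := subCols (encB A d) 𝓕 with hCdef
  set Fm := Fmat m (Fin n) with hFm
  have hC' : subCols (encB A (fun p' => d (p'.1, σ p'.2))) 𝓕' = C.submatrix ψ e := by
    ext p' j'
    simp only [hCdef, subCols, encB, Matrix.submatrix_apply, Matrix.of_apply, id_eq, he,
      Equiv.subtypeEquiv_apply, hψ, Equiv.prodCongr_apply, Equiv.coe_refl, Prod.map_apply]
    cases p' with
    | mk p1 p2 => simp only [Prod.map, id_eq]; rw [hA]
  have hG : (C.submatrix ψ e)ᵀ * (C.submatrix ψ e) = (Cᵀ * C).submatrix e e := by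
    rw [Matrix.transpose_submatrix]
    exact Matrix.submatrix_mul_equiv Cᵀ C e ψ e
  have hinv : ((Cᵀ * C).submatrix e e)⁻¹ = (Cᵀ * C)⁻¹.submatrix e e :=
    Matrix.inv_submatrix_equiv (Cᵀ * C) e e
  have hF : Fm.submatrix ψ id = Fm := by
    ext p' k'
    rfl
  have hCF : (C.submatrix ψ e)ᵀ * Fm = (Cᵀ * Fm).submatrix e id := by
    rw [Matrix.transpose_submatrix]
    calc Cᵀ.submatrix e ψ * Fm = Cᵀ.submatrix e ψ * Fm.submatrix ψ id := by rw [hF]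
      _ = (Cᵀ * Fm).submatrix e id := Matrix.submatrix_mul_equiv Cᵀ Fm e ψ id
  have hCH : C.submatrix ψ e * (Cᵀ * C)⁻¹.submatrix e e = (C * (Cᵀ * C)⁻¹).submatrix ψ e :=
    Matrix.submatrix_mul_equiv C (Cᵀ * C)⁻¹ ψ e e
  have hfin : (C * (Cᵀ * C)⁻¹).submatrix ψ e * (Cᵀ * Fm).submatrix e id
      = (C * (Cᵀ * C)⁻¹ * (Cᵀ * Fm)).submatrix ψ id :=
    Matrix.submatrix_mul_equiv (C * (Cᵀ * C)⁻¹) (Cᵀ * Fm) ψ e id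
  simp only [projMat, if_neg h𝓕', if_neg h𝓕, ← h𝓕def, ← h𝓕'def, ← hFm, hC', hG, hinv, hCF,
    hCH, hfin, ← hCdef]
  rfl

end base
end algebra
end aux

/-- Corollary 4: for the adjacency matrix of a vertex-transitive
strongly regular graph (`0 < δ ≠ μ`) and the random-diagonal construction with
`ε = 0`, the expected decoded matrix equals `β F`, `β ≠ 0`. -/
theorem stmt10 (n m δ lam mu : ℕ) (hm : 0 < m)
    (hδ : 0 < δ) (hδmu : δ ≠ mu)
    (q : ℝ) (hq0 : 0 ≤ q) (hq1 : q < 1)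
    (A : Matrix (Fin n) (Fin n) ℝ)
    (hsym : Aᵀ = A)
    (hbin : ∀ i j, A i j = 0 ∨ A i j = 1)
    (hloop : ∀ i, A i i = 0)
    (hreg : ∀ i, ∑ j, A i j = (δ : ℝ))
    (hsrg : A * A = (δ : ℝ) • (1 : Matrix (Fin n) (Fin n) ℝ) + (lam : ℝ) • A +
        (mu : ℝ) • (Matrix.of (fun _ _ => 1) - 1 - A))
    (hnonempty : ∃ i j, A i j = 1)
    (hnoncomplete : ∃ i j, i ≠ j ∧ A i j = 0)
    (htrans : ∀ u v : Fin n, ∃ σ : Equiv.Perm (Fin n),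
      σ u = v ∧ ∀ i j, A (σ i) (σ j) = A i j) :
    ∃ β : ℝ, β ≠ 0 ∧ ∀ (r : Fin m × Fin n) (i : Fin m),
      (∫ d, ∫ ω, projMat (encB A d) (finsetOf ω) r i ∂(μF (Fin n) q)
          ∂(μD m (Fin n) 0)) =
        β * Fmat m (Fin n) r i := by
  classical
  obtain ⟨rwit, cwit, hwit⟩ := hnonempty
  have hn : 0 < n := rwit.pos
  set i₀ : Fin m := ⟨0, hm⟩ with hi₀
  set r₀ : Fin n := ⟨0, hn⟩ with hr₀
  set wD : ℝ := (∏ _i : Fin m × Fin n, (2:ENNReal)⁻¹).toReal with hwD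
  set cω : Bool → ENNReal := fun b => if b then ENNReal.ofReal (1-q) else ENNReal.ofReal q
    with hcω
  set T : (Fin m × Fin n) → Fin m → ℝ := fun r i =>
    ∑ s : (Fin m × Fin n) → Bool, ∑ ω : Fin n → Bool,
      wD * ((∏ j, cω (ω j)).toReal *
        projMat (encB A (sgn s)) (finsetOf ω) r i) with hT
  have hred : ∀ (r : Fin m × Fin n) (i : Fin m),
      (∫ d, ∫ ω, projMat (encB A d) (finsetOf ω) r i ∂(μF (Fin n) q)
        ∂(μD m (Fin n) 0)) = T r i := fun r i =>
    double_red m n q (fun d ω => projMat (encB A d) (finsetOf ω) r i)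
  have hd_sgn : ∀ (s : (Fin m × Fin n) → Bool) p, sgn s p = 1 ∨ sgn s p = -1 := by
    intro s p; unfold sgn; split_ifs; exacts [Or.inl rfl, Or.inr rfl]
  -- off-diagonal blocks vanish
  have SL1 : ∀ (p : Fin m × Fin n) (i : Fin m), p.1 ≠ i → T p i = 0 := by
    intro p i hpi
    have hinv : Function.Involutive
        (fun (s : (Fin m × Fin n) → Bool) => fun p' => if p'.1 = i then !(s p') else s p') := by
      intro s; funext p'; by_cases h : p'.1 = i <;> simp [h]
    set Φ := hinv.toPerm _ with hΦ
    have h2 : ∀ s, sgn (Φ s) = fun p' => if p'.1 = i then -(sgn s p') else sgn s p' := by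
      intro s; funext p'
      simp only [hΦ, Function.Involutive.coe_toPerm]
      unfold sgn
      by_cases h : p'.1 = i <;> cases hs : s p' <;> simp [h, hs]
    have h3 : ∀ s ω, projMat (encB A (sgn (Φ s))) (finsetOf ω) p i
        = - projMat (encB A (sgn s)) (finsetOf ω) p i := by
      intro s ω
      rw [h2 s, flip_proj A (sgn s) i (finsetOf ω) p i, if_neg hpi, if_pos rfl]
      ring
    have h4 : T p i = - T p i := by
      calc T p i = ∑ s : (Fin m × Fin n) → Bool, ∑ ω : Fin n → Bool,
            wD * ((∏ j, cω (ω j)).toReal *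
              projMat (encB A (sgn (Φ s))) (finsetOf ω) p i) :=
          (Equiv.sum_comp Φ (fun s => ∑ ω : Fin n → Bool,
            wD * ((∏ j, cω (ω j)).toReal *
              projMat (encB A (sgn s)) (finsetOf ω) p i))).symm
        _ = ∑ s : (Fin m × Fin n) → Bool, ∑ ω : Fin n → Bool,
            -(wD * ((∏ j, cω (ω j)).toReal *
              projMat (encB A (sgn s)) (finsetOf ω) p i)) := by
            refine Finset.sum_congr rfl fun s _ => Finset.sum_congr rfl fun ω _ => ?_
            rw [h3 s ω]; ring
        _ = - T p i := by rw [hT]; rw [← Finset.sum_neg_distrib]; simp [Finset.sum_neg_distrib]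
    linarith
  -- independence of the block index
  have SL2 : ∀ (i : Fin m) (r₂ : Fin n), T (i, r₂) i = T (i₀, r₂) i₀ := by
    intro i r₂
    set π := Equiv.swap i i₀ with hπ
    set φ : (Fin m × Fin n) ≃ (Fin m × Fin n) := Equiv.prodCongr π (Equiv.refl (Fin n)) with hφ
    set Φ : ((Fin m × Fin n) → Bool) ≃ ((Fin m × Fin n) → Bool) :=
      Equiv.arrowCongr φ.symm (Equiv.refl Bool) with hΦ
    have key : ∀ s ω, projMat (encB A (sgn (Φ s))) (finsetOf ω) (i, r₂) i
        = projMat (encB A (sgn s)) (finsetOf ω) (i₀, r₂) i₀ := by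
      intro s ω
      have hs : sgn (Φ s) = fun p' => (sgn s) (π p'.1, p'.2) := rfl
      rw [hs, perm_proj A (sgn s) π (finsetOf ω) (i, r₂) i]
      simp [hπ, Equiv.swap_apply_left]
    calc T (i, r₂) i = ∑ s : (Fin m × Fin n) → Bool, ∑ ω : Fin n → Bool,
          wD * ((∏ j, cω (ω j)).toReal *
            projMat (encB A (sgn (Φ s))) (finsetOf ω) (i, r₂) i) :=
        (Equiv.sum_comp Φ (fun s => ∑ ω : Fin n → Bool,
          wD * ((∏ j, cω (ω j)).toReal *
            projMat (encB A (sgn s)) (finsetOf ω) (i, r₂) i))).symm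
      _ = T (i₀, r₂) i₀ := by
          refine Finset.sum_congr rfl fun s _ => Finset.sum_congr rfl fun ω _ => ?_
          rw [key s ω]
  -- independence of the vertex index
  have SL3 : ∀ r₂ : Fin n, T (i₀, r₂) i₀ = T (i₀, r₀) i₀ := by
    intro r₂
    obtain ⟨σ, hσ1, hσ2⟩ := htrans r₂ r₀
    set ψ : (Fin m × Fin n) ≃ (Fin m × Fin n) :=
      Equiv.prodCongr (Equiv.refl (Fin m)) σ with hψ
    set Φ : ((Fin m × Fin n) → Bool) ≃ ((Fin m × Fin n) → Bool) :=
      Equiv.arrowCongr ψ.symm (Equiv.refl Bool) with hΦ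
    set Ω : ((Fin n) → Bool) ≃ ((Fin n) → Bool) :=
      Equiv.arrowCongr σ.symm (Equiv.refl Bool) with hΩ
    have key : ∀ s ω, projMat (encB A (sgn (Φ s))) (finsetOf (Ω ω)) (i₀, r₂) i₀
        = projMat (encB A (sgn s)) (finsetOf ω) (i₀, σ r₂) i₀ := by
      intro s ω
      have hs : sgn (Φ s) = fun p' => (sgn s) (p'.1, σ p'.2) := rfl
      have hω : Ω ω = fun j => ω (σ j) := rfl
      rw [hs, hω]
      exact aut_proj A σ hσ2 (sgn s) ω (i₀, r₂) i₀
    have hwFinv : ∀ ω : Fin n → Bool, (∏ j, cω ((Ω ω) j)) = ∏ j, cω (ω j) := by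
      intro ω
      have hω : Ω ω = fun j => ω (σ j) := rfl
      rw [hω]
      exact Equiv.prod_comp σ (fun j => cω (ω j))
    calc T (i₀, r₂) i₀ = ∑ s : (Fin m × Fin n) → Bool, ∑ ω : Fin n → Bool,
          wD * ((∏ j, cω (ω j)).toReal *
            projMat (encB A (sgn (Φ s))) (finsetOf ω) (i₀, r₂) i₀) :=
        (Equiv.sum_comp Φ (fun s => ∑ ω : Fin n → Bool,
          wD * ((∏ j, cω (ω j)).toReal *
            projMat (encB A (sgn s)) (finsetOf ω) (i₀, r₂) i₀))).symm
      _ = ∑ s : (Fin m × Fin n) → Bool, ∑ ω : Fin n → Bool,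
          wD * ((∏ j, cω ((Ω ω) j)).toReal *
            projMat (encB A (sgn (Φ s))) (finsetOf (Ω ω)) (i₀, r₂) i₀) :=
        Finset.sum_congr rfl fun s _ =>
          (Equiv.sum_comp Ω (fun ω => wD * ((∏ j, cω (ω j)).toReal *
            projMat (encB A (sgn (Φ s))) (finsetOf ω) (i₀, r₂) i₀))).symm
      _ = T (i₀, σ r₂) i₀ := by
          refine Finset.sum_congr rfl fun s _ => Finset.sum_congr rfl fun ω _ => ?_
          rw [key s ω, hwFinv ω]
      _ = T (i₀, r₀) i₀ := by rw [hσ1]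
  -- positivity of the diagonal value
  have hwDpos : 0 < wD := by
    rw [hwD, ENNReal.toReal_prod]
    refine Finset.prod_pos fun _ _ => ?_
    rw [ENNReal.toReal_inv]
    norm_num
  have hwFnonneg : ∀ ω : Fin n → Bool, 0 ≤ (∏ j, cω (ω j)).toReal :=
    fun ω => ENNReal.toReal_nonneg
  have hgnonneg : ∀ (s : (Fin m × Fin n) → Bool) (ω : Fin n → Bool),
      0 ≤ ∑ r₂, projMat (encB A (sgn s)) (finsetOf ω) (i₀, r₂) i₀ := by
    intro s ω
    by_cases h : finsetOf ω = ∅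
    · simp [projMat, h]
    · exact (diag_sum_pos A hm hδ hδmu hsym hreg hsrg (sgn s) (hd_sgn s) (finsetOf ω) h).le
  have hβpos : 0 < T (i₀, r₀) i₀ := by
    have hsum : ∑ r₂ : Fin n, T (i₀, r₂) i₀ = (n : ℝ) * T (i₀, r₀) i₀ := by
      rw [Finset.sum_congr rfl fun r₂ _ => SL3 r₂, Finset.sum_const, Finset.card_univ]
      simp [nsmul_eq_mul]
    have hswap : ∑ r₂ : Fin n, T (i₀, r₂) i₀
        = ∑ s : (Fin m × Fin n) → Bool, ∑ ω : Fin n → Bool,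
            wD * ((∏ j, cω (ω j)).toReal *
              ∑ r₂, projMat (encB A (sgn s)) (finsetOf ω) (i₀, r₂) i₀) := by
      rw [hT]
      rw [Finset.sum_comm]
      refine Finset.sum_congr rfl fun s _ => ?_
      rw [Finset.sum_comm]
      refine Finset.sum_congr rfl fun ω _ => ?_
      rw [Finset.mul_sum, Finset.mul_sum]
    have hterm_nonneg : ∀ (s : (Fin m × Fin n) → Bool) (ω : Fin n → Bool),
        0 ≤ wD * ((∏ j, cω (ω j)).toReal *
          ∑ r₂, projMat (encB A (sgn s)) (finsetOf ω) (i₀, r₂) i₀) :=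
      fun s ω => mul_nonneg hwDpos.le (mul_nonneg (hwFnonneg ω) (hgnonneg s ω))
    have hwit_pos : 0 < wD * ((∏ j, cω ((fun _ : Fin n => true) j)).toReal *
        ∑ r₂, projMat (encB A (sgn (fun _ : Fin m × Fin n => true)))
          (finsetOf (fun _ : Fin n => true)) (i₀, r₂) i₀) := by
      have hne : finsetOf (fun _ : Fin n => true) ≠ ∅ :=
        Finset.ne_empty_of_mem (a := r₀) (by simp [finsetOf])
      refine mul_pos hwDpos (mul_pos ?_ ?_)
      · rw [ENNReal.toReal_prod]
        refine Finset.prod_pos fun _ _ => ?_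
        rw [hcω]
        simp only [if_true]
        rw [ENNReal.toReal_ofReal (by linarith)]
        linarith
      · exact diag_sum_pos A hm hδ hδmu hsym hreg hsrg _ (hd_sgn _) _ hne
    have hpos_sum : 0 < ∑ r₂ : Fin n, T (i₀, r₂) i₀ := by
      rw [hswap]
      refine Finset.sum_pos' (fun s _ => Finset.sum_nonneg fun ω _ => hterm_nonneg s ω)
        ⟨(fun _ : Fin m × Fin n => true), Finset.mem_univ _, ?_⟩
      refine Finset.sum_pos' (fun ω _ => hterm_nonneg _ ω)
        ⟨(fun _ : Fin n => true), Finset.mem_univ _, hwit_pos⟩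
    rw [hsum] at hpos_sum
    have hn' : 0 < (n : ℝ) := by exact_mod_cast hn
    nlinarith
  refine ⟨T (i₀, r₀) i₀, hβpos.ne', fun r i => ?_⟩
  rw [hred r i]
  by_cases h : r.1 = i
  · have hr : T r i = T (i₀, r₀) i₀ := by
      obtain ⟨r1, r2⟩ := r
      simp only at h
      subst h
      rw [SL2 r1 r2, SL3 r2]
    rw [hr]
    have : Fmat m (Fin n) r i = 1 := by simp [Fmat, h]
    rw [this, mul_one]
  · rw [SL1 r i h]
    have : Fmat m (Fin n) r i = 0 := by simp [Fmat, h]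
    rw [this, mul_zero]


end
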